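/- Let ψ ∈ C²([r, r+d]) with r ≥ d > 0 and ψ''(t) ∼ t^{m−2} for some m ≥ 2 (so ψ'' ∼ κ := r^{m−2} on [r,r+d]). Then for x₁, x₃ ∈ ℝ, |∫_r^{r+d} e^{−i(x₁ξ + x₃ψ(ξ))} dξ| ≲ d·(1 + |d(x₁ + ψ'(r)x₃)| + |κd² x₃|)^{−1/2}, and the same bound holds with exponent −1/m in place of −1/2. -/

import Mathlib

open Set intervalIntegral MeasureTheory

lemma ofReal_comp_hasDerivWithinAt {f : ℝ → ℝ} {u x : ℝ} {s : Set ℝ}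
    (hf : HasDerivWithinAt f u s x) :
    HasDerivWithinAt (fun y => (f y : ℂ)) (u : ℂ) s x := by
  simpa only [Function.comp_def, Complex.ofRealCLM_apply, Complex.real_smul,
    Complex.ofReal_one, mul_one] using
    (Complex.ofRealCLM.hasDerivAt (x := f x)).scomp_hasDerivWithinAt x hf

lemma inv_abs_sub_le {lam x y : ℝ} (hlam : 0 < lam) (hx : lam ≤ x) (hy : lam ≤ y) :
    |x⁻¹ - y⁻¹| ≤ lam⁻¹ := by
  have hx0 : 0 < x := lt_of_lt_of_le hlam hx
  have hy0 : 0 < y := lt_of_lt_of_le hlam hy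
  have h1 : x⁻¹ ≤ lam⁻¹ := inv_anti₀ hlam hx
  have h2 : y⁻¹ ≤ lam⁻¹ := inv_anti₀ hlam hy
  have h3 : 0 < x⁻¹ := inv_pos.mpr hx0
  have h4 : 0 < y⁻¹ := inv_pos.mpr hy0
  rw [abs_le]; constructor <;> linarith

/-- sign dichotomy for a continuous function bounded away from 0 on an interval -/
lemma sign_dichotomy {a b lam : ℝ} (hab : a ≤ b) (hlam : 0 < lam) {f' : ℝ → ℝ}
    (hcont : ContinuousOn f' (Icc a b)) (hlow : ∀ t ∈ Icc a b, lam ≤ |f' t|) :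
    (∀ t ∈ Icc a b, lam ≤ f' t) ∨ (∀ t ∈ Icc a b, f' t ≤ -lam) := by
  have ha : a ∈ Icc a b := left_mem_Icc.mpr hab
  have habs : ∀ t ∈ Icc a b, lam ≤ f' t ∨ f' t ≤ -lam := by
    intro t ht
    have h := hlow t ht
    rcases abs_cases (f' t) with ⟨he, _⟩ | ⟨he, _⟩
    · exact Or.inl (he ▸ h)
    · exact Or.inr (by linarith)
  have hne : ∀ t ∈ Icc a b, f' t ≠ 0 := fun t ht h0 => by
    have := hlow t ht; rw [h0, abs_zero] at this; linarith
  rcases habs a ha with hpa | hna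
  · left
    intro t ht
    rcases habs t ht with h | h
    · exact h
    · exfalso
      have hsub : Icc a t ⊆ Icc a b := Icc_subset_Icc le_rfl ht.2
      have h0 : (0:ℝ) ∈ Icc (f' t) (f' a) := ⟨by linarith, by linarith⟩
      obtain ⟨c, hc, hc0⟩ := intermediate_value_Icc' ht.1 (hcont.mono hsub) h0
      exact hne c (hsub hc) hc0
  · right
    intro t ht
    rcases habs t ht with h | h
    · exfalso
      have hsub : Icc a t ⊆ Icc a b := Icc_subset_Icc le_rfl ht.2
      have h0 : (0:ℝ) ∈ Icc (f' a) (f' t) := ⟨by linarith, by linarith⟩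
      obtain ⟨c, hc, hc0⟩ := intermediate_value_Icc ht.1 (hcont.mono hsub) h0
      exact hne c (hsub hc) hc0
    · exact h

/-- First-order van der Corput with C¹ derivative of constant-sign second derivative. -/
lemma vdC1 {a b lam : ℝ} (hab : a ≤ b) (hlam : 0 < lam) (f f' f'' : ℝ → ℝ)
    (hd1 : ∀ t ∈ Icc a b, HasDerivWithinAt f (f' t) (Icc a b) t)
    (hd2 : ∀ t ∈ Icc a b, HasDerivWithinAt f' (f'' t) (Icc a b) t)
    (hcont2 : ContinuousOn f'' (Icc a b))
    (hsign : (∀ t ∈ Icc a b, 0 ≤ f'' t) ∨ (∀ t ∈ Icc a b, f'' t ≤ 0))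
    (hlow : ∀ t ∈ Icc a b, lam ≤ |f' t|) :
    ‖∫ t in a..b, Complex.exp ((f t : ℂ) * Complex.I)‖ ≤ 3 / lam := by
  have hcont1 : ContinuousOn f' (Icc a b) := fun t ht => (hd2 t ht).continuousWithinAt
  have hcont0 : ContinuousOn f (Icc a b) := fun t ht => (hd1 t ht).continuousWithinAt
  have hne : ∀ t ∈ Icc a b, f' t ≠ 0 := fun t ht h0 => by
    have := hlow t ht; rw [h0, abs_zero] at this; linarith
  have hneC : ∀ t ∈ Icc a b, ((f' t : ℂ)) * Complex.I ≠ 0 := fun t ht =>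
    mul_ne_zero (Complex.ofReal_ne_zero.mpr (hne t ht)) Complex.I_ne_zero
  set F : ℝ → ℂ := fun t => Complex.exp ((f t : ℂ) * Complex.I) with hF
  set g : ℝ → ℂ := fun t => (((f' t)⁻¹ : ℝ) : ℂ) * (-Complex.I) with hg
  set G : ℝ → ℂ := fun t => F t * (((f'' t / (f' t)^2 : ℝ) : ℂ) * Complex.I) with hGdef
  have hFd : ∀ t ∈ Icc a b, HasDerivWithinAt F (F t * ((f' t : ℂ) * Complex.I)) (Icc a b) t := by
    intro t ht
    have := ((ofReal_comp_hasDerivWithinAt (hd1 t ht)).mul_const Complex.I).cexp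
    simpa [hF] using this
  have hgd : ∀ t ∈ Icc a b, HasDerivWithinAt g
      (((-(f'' t) / (f' t)^2 : ℝ) : ℂ) * (-Complex.I)) (Icc a b) t := by
    intro t ht
    have h0 : HasDerivWithinAt (fun y => (f' y)⁻¹) (-(f'' t) / (f' t)^2) (Icc a b) t :=
      (hd2 t ht).inv (hne t ht)
    exact (ofReal_comp_hasDerivWithinAt h0).mul_const (-Complex.I)
  have hhd : ∀ t ∈ Icc a b, HasDerivWithinAt (fun t => F t * g t) (F t + G t) (Icc a b) t := by
    intro t ht
    have h := (hFd t ht).mul (hgd t ht)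
    refine h.congr_deriv (Eq.symm ?_)
    have h1 : (f' t : ℂ) ≠ 0 := Complex.ofReal_ne_zero.mpr (hne t ht)
    rw [hg, hGdef]
    push_cast
    field_simp
    ring_nf
    simp [Complex.I_sq]
  have hcontFg : ContinuousOn (fun t => F t * g t) (Icc a b) :=
    fun t ht => (hhd t ht).continuousWithinAt
  have hcontF : ContinuousOn F (Icc a b) :=
    (Complex.continuous_exp.comp_continuousOn
      ((Complex.continuous_ofReal.comp_continuousOn hcont0).mul continuousOn_const))
  have hcontq : ContinuousOn (fun t => f'' t / (f' t)^2) (Icc a b) :=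
    hcont2.div (hcont1.pow 2) (fun t ht => pow_ne_zero 2 (hne t ht))
  have hcontG : ContinuousOn G (Icc a b) :=
    hcontF.mul ((Complex.continuous_ofReal.comp_continuousOn hcontq).mul continuousOn_const)
  have hintF : IntervalIntegrable F volume a b :=
    (hcontF.mono (by rw [uIcc_of_le hab])).intervalIntegrable
  have hintG : IntervalIntegrable G volume a b :=
    (hcontG.mono (by rw [uIcc_of_le hab])).intervalIntegrable
  have hFTC : ∫ t in a..b, (F t + G t) = F b * g b - F a * g a := by
    apply integral_eq_sub_of_hasDeriv_right_of_le hab hcontFg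
    · intro x hx
      exact (hhd x (Ioo_subset_Icc_self hx)).mono_of_mem_nhdsWithin
        (Icc_mem_nhdsGT_of_mem ⟨le_of_lt hx.1, hx.2⟩)
    · exact hintF.add hintG
  have hsplit : ∫ t in a..b, F t = F b * g b - F a * g a - ∫ t in a..b, G t := by
    rw [← hFTC, integral_add hintF hintG]; ring
  -- real FTC for f''/f'^2
  have hpd : ∀ t ∈ Icc a b, HasDerivWithinAt (fun t => -(f' t)⁻¹) (f'' t / (f' t)^2) (Icc a b) t := by
    intro t ht
    have := ((hd2 t ht).inv (hne t ht)).neg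
    exact this.congr_deriv (by ring)
  have hintq : IntervalIntegrable (fun t => f'' t / (f' t)^2) volume a b :=
    (hcontq.mono (by rw [uIcc_of_le hab])).intervalIntegrable
  have hFTC2 : ∫ t in a..b, f'' t / (f' t)^2 = (f' a)⁻¹ - (f' b)⁻¹ := by
    rw [show (f' a)⁻¹ - (f' b)⁻¹ = -(f' b)⁻¹ - -(f' a)⁻¹ by ring]
    apply integral_eq_sub_of_hasDeriv_right_of_le hab
    · exact fun t ht => (hpd t ht).continuousWithinAt
    · intro x hx
      exact (hpd x (Ioo_subset_Icc_self hx)).mono_of_mem_nhdsWithin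
        (Icc_mem_nhdsGT_of_mem ⟨le_of_lt hx.1, hx.2⟩)
    · exact hintq
  have hGnorm : ∀ t ∈ Icc a b, ‖G t‖ = |f'' t| / (f' t)^2 := by
    intro t ht
    rw [hGdef]
    simp [hF, Complex.norm_exp_ofReal_mul_I, abs_div, abs_of_nonneg (sq_nonneg (f' t))]
  have hq_le : ‖∫ t in a..b, G t‖ ≤ |(f' a)⁻¹ - (f' b)⁻¹| := by
    have h1 : ‖∫ t in a..b, G t‖ ≤ ∫ t in a..b, ‖G t‖ :=
      norm_integral_le_integral_norm hab
    have h2 : ∫ t in a..b, ‖G t‖ = ∫ t in a..b, |f'' t| / (f' t)^2 := by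
      apply integral_congr
      intro t ht
      exact hGnorm t (by rwa [uIcc_of_le hab] at ht)
    rcases hsign with hp | hn
    · have h3 : ∫ t in a..b, |f'' t| / (f' t)^2 = ∫ t in a..b, f'' t / (f' t)^2 := by
        apply integral_congr
        intro t ht
        rw [uIcc_of_le hab] at ht
        simp [abs_of_nonneg (hp t ht)]
      calc ‖∫ t in a..b, G t‖ ≤ ∫ t in a..b, |f'' t| / (f' t)^2 := le_trans h1 (le_of_eq h2)
        _ = (f' a)⁻¹ - (f' b)⁻¹ := by rw [h3, hFTC2]
        _ ≤ |(f' a)⁻¹ - (f' b)⁻¹| := le_abs_self _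
    · have h3 : ∫ t in a..b, |f'' t| / (f' t)^2 = -∫ t in a..b, f'' t / (f' t)^2 := by
        rw [← intervalIntegral.integral_neg]
        apply integral_congr
        intro t ht
        rw [uIcc_of_le hab] at ht
        simp [abs_of_nonpos (hn t ht), neg_div]
      calc ‖∫ t in a..b, G t‖ ≤ ∫ t in a..b, |f'' t| / (f' t)^2 := le_trans h1 (le_of_eq h2)
        _ = -((f' a)⁻¹ - (f' b)⁻¹) := by rw [h3, hFTC2]
        _ ≤ |(f' a)⁻¹ - (f' b)⁻¹| := neg_le_abs _
  -- bound |1/f'a - 1/f'b| ≤ 1/lam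
  have hb_ : b ∈ Icc a b := right_mem_Icc.mpr hab
  have ha_ : a ∈ Icc a b := left_mem_Icc.mpr hab
  have hv : |(f' a)⁻¹ - (f' b)⁻¹| ≤ lam⁻¹ := by
    rcases sign_dichotomy hab hlam hcont1 hlow with hp | hn
    · exact inv_abs_sub_le hlam (hp a ha_) (hp b hb_)
    · have : |(f' a)⁻¹ - (f' b)⁻¹| = |(-f' a)⁻¹ - (-f' b)⁻¹| := by
        rw [inv_neg, inv_neg, ← abs_neg]; ring_nf
      rw [this]
      exact inv_abs_sub_le hlam (by linarith [hn a ha_]) (by linarith [hn b hb_])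
  have hgnorm : ∀ t ∈ Icc a b, ‖g t‖ ≤ lam⁻¹ := by
    intro t ht
    rw [hg]
    simp only [norm_mul, norm_neg, Complex.norm_I, mul_one, Complex.norm_real,
      Real.norm_eq_abs, abs_inv]
    exact inv_anti₀ hlam (hlow t ht)
  calc ‖∫ t in a..b, F t‖
      = ‖F b * g b - F a * g a - ∫ t in a..b, G t‖ := by rw [hsplit]
    _ ≤ ‖F b * g b - F a * g a‖ + ‖∫ t in a..b, G t‖ := norm_sub_le _ _
    _ ≤ (‖F b * g b‖ + ‖F a * g a‖) + |(f' a)⁻¹ - (f' b)⁻¹| :=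
        add_le_add (norm_sub_le _ _) hq_le
    _ ≤ (lam⁻¹ + lam⁻¹) + lam⁻¹ := by
        apply add_le_add _ hv
        apply add_le_add
        · rw [norm_mul, hF]
          simpa [Complex.norm_exp_ofReal_mul_I] using hgnorm b hb_
        · rw [norm_mul, hF]
          simpa [Complex.norm_exp_ofReal_mul_I] using hgnorm a ha_
    _ = 3 / lam := by rw [div_eq_mul_inv]; ring

/-- Second-order van der Corput, `f'' ≥ mu > 0`. -/
lemma vdC2 {a b mu : ℝ} (hab : a ≤ b) (hmu : 0 < mu) (f f' f'' : ℝ → ℝ)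
    (hd1 : ∀ t ∈ Icc a b, HasDerivWithinAt f (f' t) (Icc a b) t)
    (hd2 : ∀ t ∈ Icc a b, HasDerivWithinAt f' (f'' t) (Icc a b) t)
    (hcont2 : ContinuousOn f'' (Icc a b))
    (hlow : ∀ t ∈ Icc a b, mu ≤ f'' t) :
    ‖∫ t in a..b, Complex.exp ((f t : ℂ) * Complex.I)‖ ≤ 8 / Real.sqrt mu := by
  set δ := Real.sqrt mu with hδdef
  have hδ : 0 < δ := Real.sqrt_pos.mpr hmu
  have hδ2 : δ * δ = mu := Real.mul_self_sqrt hmu.le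
  have hcont1 : ContinuousOn f' (Icc a b) := fun t ht => (hd2 t ht).continuousWithinAt
  have hcont0 : ContinuousOn f (Icc a b) := fun t ht => (hd1 t ht).continuousWithinAt
  set F : ℝ → ℂ := fun t => Complex.exp ((f t : ℂ) * Complex.I) with hF
  have hcontF : ContinuousOn F (Icc a b) :=
    (Complex.continuous_exp.comp_continuousOn
      ((Complex.continuous_ofReal.comp_continuousOn hcont0).mul continuousOn_const))
  -- quantitative growth of f'
  have key : ∀ s t, s ∈ Icc a b → t ∈ Icc a b → s ≤ t → mu * (t - s) ≤ f' t - f' s := by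
    intro s t hs ht hst
    have hsub : Icc s t ⊆ Icc a b := Icc_subset_Icc hs.1 ht.2
    have hint : IntervalIntegrable f'' volume s t :=
      ((hcont2.mono hsub).mono (by rw [uIcc_of_le hst])).intervalIntegrable
    have hftc : ∫ x in s..t, f'' x = f' t - f' s := by
      apply integral_eq_sub_of_hasDeriv_right_of_le hst (hcont1.mono hsub)
      · intro x hx
        have hx' : x ∈ Icc a b := hsub (Ioo_subset_Icc_self hx)
        exact (hd2 x hx').mono_of_mem_nhdsWithin
          (Icc_mem_nhdsGT_of_mem ⟨hx'.1, lt_of_lt_of_le hx.2 ht.2⟩)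
      · exact hint
    have hmono : ∫ x in s..t, mu ≤ ∫ x in s..t, f'' x := by
      apply integral_mono_on hst intervalIntegrable_const hint
      intro x hx
      exact hlow x (hsub hx)
    rw [intervalIntegral.integral_const, smul_eq_mul] at hmono
    rw [← hftc]; nlinarith [hmono]
  have hmono : ∀ s t, s ∈ Icc a b → t ∈ Icc a b → s ≤ t → f' s ≤ f' t := by
    intro s t hs ht hst
    have := key s t hs ht hst
    nlinarith
  -- split points
  set S := {t | t ∈ Icc a b ∧ f' t ≤ -δ} with hSdef
  set T := {t | t ∈ Icc a b ∧ δ ≤ f' t} with hTdef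
  have hSc : IsClosed S := by
    have : S = Icc a b ∩ f' ⁻¹' Iic (-δ) := by
      ext t; simp [hSdef, and_comm]
    rw [this]
    exact hcont1.preimage_isClosed_of_isClosed isClosed_Icc isClosed_Iic
  have hTc : IsClosed T := by
    have : T = Icc a b ∩ f' ⁻¹' Ici δ := by
      ext t; simp [hTdef, and_comm]
    rw [this]
    exact hcont1.preimage_isClosed_of_isClosed isClosed_Icc isClosed_Ici
  have hSsub : insert a S ⊆ Icc a b := by
    intro t ht; rcases ht with rfl | ht
    · exact left_mem_Icc.mpr hab
    · exact ht.1
  have hTsub : insert b T ⊆ Icc a b := by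
    intro t ht; rcases ht with rfl | ht
    · exact right_mem_Icc.mpr hab
    · exact ht.1
  have hScpt : IsCompact (insert a S) :=
    isCompact_Icc.of_isClosed_subset ((isClosed_singleton (x := a)).union hSc) hSsub
  have hTcpt : IsCompact (insert b T) :=
    isCompact_Icc.of_isClosed_subset ((isClosed_singleton (x := b)).union hTc) hTsub
  set u := sSup (insert a S) with hudef
  set v := sInf (insert b T) with hvdef
  have hu_mem' : u ∈ insert a S := hScpt.sSup_mem (insert_nonempty _ _)
  have hv_mem' : v ∈ insert b T := hTcpt.sInf_mem (insert_nonempty _ _)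
  have hu_mem : u ∈ Icc a b := hSsub hu_mem'
  have hv_mem : v ∈ Icc a b := hTsub hv_mem'
  have hu_ub : ∀ t ∈ S, t ≤ u := fun t ht => le_csSup hScpt.bddAbove (mem_insert_of_mem _ ht)
  have hv_lb : ∀ t ∈ T, v ≤ t := fun t ht => csInf_le hTcpt.bddBelow (mem_insert_of_mem _ ht)
  clear_value u v
  have hau : a ≤ u := hu_mem.1
  have hvb : v ≤ b := hv_mem.2
  have huv : u ≤ v := by
    rcases hu_mem' with rfl | huS
    · exact hv_mem.1
    · rcases hv_mem' with rfl | hvT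
      · exact hu_mem.2
      · by_contra h
        push_neg at h
        have := hmono v u hv_mem hu_mem h.le
        have h1 := huS.2
        have h2 := hvT.2
        linarith
  -- middle interval is short
  have hmid : v - u ≤ 2 / δ := by
    have h2δ : 0 < 2 / δ := by positivity
    have step : ∀ ε : ℝ, 0 < ε → v - u ≤ 2 / δ + 2 * ε := by
      intro ε hε
      rcases le_or_gt (v - u) (2 * ε) with h | h
      · linarith
      · set s := u + ε with hs
        set t := v - ε with ht
        have hst : s ≤ t := by simp [hs, ht]; linarith
        have hsmem : s ∈ Icc a b := ⟨by simp [hs]; linarith, by simp [hs]; linarith⟩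
        have htmem : t ∈ Icc a b := ⟨by simp [ht]; linarith, by simp [ht]; linarith⟩
        have h1 : -δ < f' s := by
          by_contra hcon
          push_neg at hcon
          have : s ≤ u := hu_ub s ⟨hsmem, hcon⟩
          simp [hs] at this; linarith
        have h2 : f' t < δ := by
          by_contra hcon
          push_neg at hcon
          have : v ≤ t := hv_lb t ⟨htmem, hcon⟩
          simp [ht] at this; linarith
        have h3 := key s t hsmem htmem hst
        have h4 : mu * (t - s) ≤ 2 * δ := by nlinarith
        have h5 : t - s = v - u - 2*ε := by simp [hs, ht]; ring
        rw [h5] at h4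
        have : v - u - 2*ε ≤ 2 * δ / mu := by
          rw [le_div_iff₀ hmu]; linarith [mul_comm mu (v - u - 2*ε)]
        have h6 : 2 * δ / mu = 2 / δ := by
          rw [← hδ2]; field_simp
        linarith [h6 ▸ this]
    by_contra hcon
    push_neg at hcon
    have hε : 0 < (v - u - 2/δ)/3 := by linarith
    have := step _ hε
    linarith
  -- integrability on subintervals
  have hintsub : ∀ s t, s ∈ Icc a b → t ∈ Icc a b → IntervalIntegrable F volume s t := by
    intro s t hs ht
    apply (hcontF.mono _).intervalIntegrable
    rw [← uIcc_of_le hab, uIcc_subset_uIcc_iff_mem]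
    rw [uIcc_of_le hab]
    exact ⟨hs, ht⟩
  have hsplit : ∫ t in a..b, F t = (∫ t in a..u, F t) + (∫ t in u..v, F t) + (∫ t in v..b, F t) := by
    rw [integral_add_adjacent_intervals (hintsub a u (left_mem_Icc.mpr hab) hu_mem)
      (hintsub u v hu_mem hv_mem),
      integral_add_adjacent_intervals
        (hintsub a v (left_mem_Icc.mpr hab) hv_mem) (hintsub v b hv_mem (right_mem_Icc.mpr hab))]
  -- middle piece
  have hmid_bd : ‖∫ t in u..v, F t‖ ≤ 2 / δ := by
    have h1 : ‖∫ t in u..v, F t‖ ≤ 1 * |v - u| := by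
      apply intervalIntegral.norm_integral_le_of_norm_le_const
      intro x hx
      simp [hF, Complex.norm_exp_ofReal_mul_I]
    rw [one_mul, abs_of_nonneg (by linarith)] at h1
    linarith
  -- left piece
  have hleft : ‖∫ t in a..u, F t‖ ≤ 3 / δ := by
    rcases hu_mem' with rfl | huS
    · simp [integral_same]; positivity
    · have hIccsub : Icc a u ⊆ Icc a b := Icc_subset_Icc le_rfl hu_mem.2
      apply vdC1 hau hδ f f' f''
      · exact fun t ht => (hd1 t (hIccsub ht)).mono hIccsub
      · exact fun t ht => (hd2 t (hIccsub ht)).mono hIccsub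
      · exact hcont2.mono hIccsub
      · exact Or.inl (fun t ht => le_trans hmu.le (hlow t (hIccsub ht)))
      · intro t ht
        have h1 : f' t ≤ f' u := hmono t u (hIccsub ht) hu_mem ht.2
        have h2 : f' t ≤ -δ := le_trans h1 huS.2
        rw [abs_of_nonpos (by linarith)]; linarith
  -- right piece
  have hright : ‖∫ t in v..b, F t‖ ≤ 3 / δ := by
    rcases hv_mem' with rfl | hvT
    · simp [integral_same]; positivity
    · have hIccsub : Icc v b ⊆ Icc a b := Icc_subset_Icc hv_mem.1 le_rfl
      apply vdC1 hvb hδ f f' f''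
      · exact fun t ht => (hd1 t (hIccsub ht)).mono hIccsub
      · exact fun t ht => (hd2 t (hIccsub ht)).mono hIccsub
      · exact hcont2.mono hIccsub
      · exact Or.inl (fun t ht => le_trans hmu.le (hlow t (hIccsub ht)))
      · intro t ht
        have h1 : f' v ≤ f' t := hmono v t hv_mem (hIccsub ht) ht.1
        have h2 : δ ≤ f' t := le_trans hvT.2 h1
        rw [abs_of_nonneg (by linarith)]; linarith
  calc ‖∫ t in a..b, F t‖
      ≤ ‖∫ t in a..u, F t‖ + ‖∫ t in u..v, F t‖ + ‖∫ t in v..b, F t‖ := by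
        rw [hsplit]
        exact le_trans (norm_add_le _ _) (by gcongr; exact norm_add_le _ _)
    _ ≤ 3 / δ + 2 / δ + 3 / δ := by gcongr <;> assumption
    _ = 8 / δ := by ring

lemma conj_integral_norm {a b : ℝ} (f : ℝ → ℝ) :
    ‖∫ t in a..b, Complex.exp ((f t : ℂ) * Complex.I)‖
      = ‖∫ t in a..b, Complex.exp ((↑(-f t) : ℂ) * Complex.I)‖ := by
  have h1 : ∀ t : ℝ, Complex.exp ((↑(-f t) : ℂ) * Complex.I)
      = (starRingEnd ℂ) (Complex.exp ((f t : ℂ) * Complex.I)) := by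
    intro t
    rw [← Complex.exp_conj]
    push_cast
    simp [mul_comm]
  have h2 : ∫ t in a..b, Complex.exp ((↑(-f t) : ℂ) * Complex.I)
      = (starRingEnd ℂ) (∫ t in a..b, Complex.exp ((f t : ℂ) * Complex.I)) := by
    simp_rw [h1]
    simp only [intervalIntegral, integral_conj]
    rw [map_sub]
  rw [h2, RCLike.norm_conj]

/-- Second-order van der Corput, `|f''| ≥ mu > 0` with constant sign. -/
lemma vdC2' {a b mu : ℝ} (hab : a ≤ b) (hmu : 0 < mu) (f f' f'' : ℝ → ℝ)
    (hd1 : ∀ t ∈ Icc a b, HasDerivWithinAt f (f' t) (Icc a b) t)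
    (hd2 : ∀ t ∈ Icc a b, HasDerivWithinAt f' (f'' t) (Icc a b) t)
    (hcont2 : ContinuousOn f'' (Icc a b))
    (hlow : (∀ t ∈ Icc a b, mu ≤ f'' t) ∨ (∀ t ∈ Icc a b, f'' t ≤ -mu)) :
    ‖∫ t in a..b, Complex.exp ((f t : ℂ) * Complex.I)‖ ≤ 8 / Real.sqrt mu := by
  rcases hlow with h | h
  · exact vdC2 hab hmu f f' f'' hd1 hd2 hcont2 h
  · rw [conj_integral_norm]
    exact vdC2 hab hmu (fun t => -f t) (fun t => -f' t) (fun t => -f'' t)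
      (fun t ht => (hd1 t ht).neg) (fun t ht => (hd2 t ht).neg) hcont2.neg
      (fun t ht => by show mu ≤ -f'' t; linarith [h t ht])

set_option maxHeartbeats 2000000 in
/-- Van der Corput-type bound: if `ψ ∈ C²([r, r+d])` with `r ≥ d > 0` and
`ψ'' ∼ κ := r^{m-2}` on `[r, r+d]` (`m ≥ 2`), then
`|∫_r^{r+d} e^{-i(x₁ξ + x₃ψ(ξ))} dξ| ≲ d (1 + |d(x₁+ψ'(r)x₃)| + |κ d² x₃|)^{-1/2}`,
and the same bound holds with exponent `-1/m` instead of `-1/2`. -/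
theorem stmt_15 (m c₀ C₀ : ℝ) (hm : 2 ≤ m) (hc₀ : 0 < c₀) (hC₀ : 0 < C₀) :
    ∃ Cb : ℝ, 0 < Cb ∧
      ∀ (ψ : ℝ → ℝ) (r d κ x₁ x₃ : ℝ),
        0 < d → d ≤ r → κ = r ^ (m - 2) →
        ContDiffOn ℝ 2 ψ (Set.Icc r (r + d)) →
        (∀ t ∈ Set.Icc r (r + d),
          c₀ * κ ≤ iteratedDerivWithin 2 ψ (Set.Icc r (r + d)) t ∧
            iteratedDerivWithin 2 ψ (Set.Icc r (r + d)) t ≤ C₀ * κ) →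
        ‖∫ ξ in r..(r + d),
            Complex.exp (-Complex.I * ((x₁ * ξ + x₃ * ψ ξ : ℝ) : ℂ))‖ ≤
          Cb * d * (1 + |d * (x₁ + derivWithin ψ (Set.Icc r (r + d)) r * x₃)| +
            |κ * d ^ 2 * x₃|) ^ (-(1:ℝ) / 2) ∧
        ‖∫ ξ in r..(r + d),
            Complex.exp (-Complex.I * ((x₁ * ξ + x₃ * ψ ξ : ℝ) : ℂ))‖ ≤
          Cb * d * (1 + |d * (x₁ + derivWithin ψ (Set.Icc r (r + d)) r * x₃)| +
            |κ * d ^ 2 * x₃|) ^ (-(1:ℝ) / m) := by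
  set C₀' : ℝ := max C₀ 1 with hC₀'def
  have hC₀'1 : (1:ℝ) ≤ C₀' := le_max_right _ _
  have hC₀'pos : (0:ℝ) < C₀' := lt_of_lt_of_le one_pos hC₀'1
  have hC₀le : C₀ ≤ C₀' := le_max_left _ _
  set Cb : ℝ := 8 * Real.sqrt (12 * C₀') / Real.sqrt c₀ + 18 with hCbdef
  have hCbpos : 0 < Cb := by positivity
  refine ⟨Cb, hCbpos, ?_⟩
  intro ψ r d κ x₁ x₃ hd hdr hκ hψ hbd
  have hr : 0 < r := lt_of_lt_of_le hd hdr
  have hκpos : 0 < κ := by rw [hκ]; exact Real.rpow_pos_of_pos hr _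
  have hrd : r < r + d := by linarith
  set s : Set ℝ := Icc r (r + d) with hsdef
  have hU : UniqueDiffOn ℝ s := uniqueDiffOn_Icc hrd
  set ψ' : ℝ → ℝ := derivWithin ψ s with hψ'def
  set ψ'' : ℝ → ℝ := iteratedDerivWithin 2 ψ s with hψ''def
  have hψ1 : ∀ t ∈ s, HasDerivWithinAt ψ (ψ' t) s t := by
    intro t ht
    exact ((hψ.differentiableOn (by norm_num)) t ht).hasDerivWithinAt
  have hψ2 : ∀ t ∈ s, HasDerivWithinAt ψ' (ψ'' t) s t := by
    have hC1 : ContDiffOn ℝ 1 ψ' s := hψ.derivWithin hU (by norm_num)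
    intro t ht
    have h1 : HasDerivWithinAt ψ' (derivWithin ψ' s t) s t :=
      ((hC1.differentiableOn (by norm_num)) t ht).hasDerivWithinAt
    have h2 : ψ'' t = derivWithin ψ' s t := by
      rw [hψ''def, iteratedDerivWithin_succ]
      apply derivWithin_congr
      · intro y hy
        exact congrFun iteratedDerivWithin_one y
      · exact congrFun iteratedDerivWithin_one t
    rw [h2]; exact h1
  have hcont2 : ContinuousOn ψ'' s :=
    hψ.continuousOn_iteratedDerivWithin (le_refl _) hU
  have hcont1 : ContinuousOn ψ' s := fun t ht => (hψ2 t ht).continuousWithinAt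
  have hrmem : r ∈ s := left_mem_Icc.mpr hrd.le
  -- growth of ψ'
  have hgrow : ∀ t ∈ s, 0 ≤ ψ' t - ψ' r ∧ ψ' t - ψ' r ≤ C₀ * κ * d := by
    intro t ht
    have htr : r ≤ t := ht.1
    have hsub : Icc r t ⊆ s := Icc_subset_Icc le_rfl ht.2
    have hint : IntervalIntegrable ψ'' volume r t :=
      ((hcont2.mono hsub).mono (by rw [uIcc_of_le htr])).intervalIntegrable
    have hftc : ∫ x in r..t, ψ'' x = ψ' t - ψ' r := by
      apply integral_eq_sub_of_hasDeriv_right_of_le htr (hcont1.mono hsub)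
      · intro x hx
        have hx' : x ∈ s := hsub (Ioo_subset_Icc_self hx)
        exact (hψ2 x hx').mono_of_mem_nhdsWithin
          (Icc_mem_nhdsGT_of_mem ⟨hx'.1, lt_of_lt_of_le hx.2 ht.2⟩)
      · exact hint
    have hlo : ∫ x in r..t, (c₀ * κ) ≤ ∫ x in r..t, ψ'' x := by
      apply integral_mono_on htr intervalIntegrable_const hint
      exact fun x hx => (hbd x (hsub hx)).1
    have hhi : ∫ x in r..t, ψ'' x ≤ ∫ x in r..t, (C₀ * κ) := by
      apply integral_mono_on htr hint intervalIntegrable_const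
      exact fun x hx => (hbd x (hsub hx)).2
    rw [intervalIntegral.integral_const, smul_eq_mul] at hlo hhi
    have htd : t - r ≤ d := by
      have := ht.2; simp [hsdef] at this ⊢; linarith
    constructor
    · rw [← hftc]
      nlinarith [hlo, mul_nonneg (sub_nonneg.mpr htr) (mul_nonneg hc₀.le hκpos.le)]
    · rw [← hftc]
      nlinarith [hhi, mul_le_mul_of_nonneg_left htd (mul_nonneg hC₀.le hκpos.le),
        mul_nonneg (sub_nonneg.mpr htr) (mul_nonneg hC₀.le hκpos.le)]
  -- the phase
  set f : ℝ → ℝ := fun t => -(x₁ * t + x₃ * ψ t) with hfdef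
  set f' : ℝ → ℝ := fun t => -(x₁ + x₃ * ψ' t) with hf'def
  set f'' : ℝ → ℝ := fun t => -(x₃ * ψ'' t) with hf''def
  have hfd1 : ∀ t ∈ s, HasDerivWithinAt f (f' t) s t := by
    intro t ht
    have h1 : HasDerivWithinAt (fun y => x₁ * y + x₃ * ψ y) (x₁ + x₃ * ψ' t) s t := by
      have ha : HasDerivWithinAt (fun y : ℝ => x₁ * y) x₁ s t := by
        simpa using (hasDerivWithinAt_id t s).const_mul x₁
      exact ha.add ((hψ1 t ht).const_mul x₃)
    exact h1.neg
  have hfd2 : ∀ t ∈ s, HasDerivWithinAt f' (f'' t) s t := by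
    intro t ht
    have h1 : HasDerivWithinAt (fun y => x₁ + x₃ * ψ' y) (x₃ * ψ'' t) s t := by
      have h0 := (hasDerivWithinAt_const t s x₁).add ((hψ2 t ht).const_mul x₃)
      rw [zero_add] at h0; exact h0
    exact h1.neg
  have hfcont2 : ContinuousOn f'' s := (hcont2.const_smul x₃).neg
  -- rewrite the integrand
  have heq : (∫ ξ in r..(r + d), Complex.exp (-Complex.I * ((x₁ * ξ + x₃ * ψ ξ : ℝ) : ℂ)))
      = ∫ ξ in r..(r + d), Complex.exp ((f ξ : ℂ) * Complex.I) := by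
    apply intervalIntegral.integral_congr
    intro t ht
    show Complex.exp _ = Complex.exp _
    congr 1
    rw [hfdef]
    push_cast
    ring
  -- abbreviations
  set A : ℝ := |d * (x₁ + ψ' r * x₃)| with hAdef
  set B : ℝ := |κ * d ^ 2 * x₃| with hBdef
  set Sb : ℝ := 1 + A + B with hSbdef
  have hA0 : 0 ≤ A := abs_nonneg _
  have hB0 : 0 ≤ B := abs_nonneg _
  have hSb1 : 1 ≤ Sb := by rw [hSbdef]; linarith
  have hSbpos : 0 < Sb := lt_of_lt_of_le one_pos hSb1
  have hsqSb : 0 < Real.sqrt Sb := Real.sqrt_pos.mpr hSbpos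
  have hBx : B = κ * d^2 * |x₃| := by
    rw [hBdef, abs_mul, abs_of_nonneg (by positivity : (0:ℝ) ≤ κ * d^2)]
  -- main bound
  have hmain : ‖∫ ξ in r..(r + d), Complex.exp ((f ξ : ℂ) * Complex.I)‖
      ≤ Cb * d / Real.sqrt Sb := by
    rcases le_or_gt Sb (12 * C₀' * B) with hcase1 | hcase1
    · -- second derivative dominates
      have hBpos : 0 < B := by nlinarith
      have hx₃ : x₃ ≠ 0 := by
        intro h0; rw [hBdef, h0] at hBpos; simp at hBpos
      have hx₃abs : 0 < |x₃| := abs_pos.mpr hx₃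
      set mu : ℝ := c₀ * κ * |x₃| with hmudef
      have hmu : 0 < mu := by positivity
      have hsign : (∀ t ∈ s, mu ≤ f'' t) ∨ (∀ t ∈ s, f'' t ≤ -mu) := by
        rcases lt_or_gt_of_ne hx₃ with hneg | hpos
        · left
          intro t ht
          have h1 := (hbd t ht).1
          have hb : f'' t = -(x₃ * ψ'' t) := rfl
          rw [hb, hmudef, abs_of_neg hneg]
          nlinarith
        · right
          intro t ht
          have h1 := (hbd t ht).1
          have hb : f'' t = -(x₃ * ψ'' t) := rfl
          rw [hb, hmudef, abs_of_pos hpos]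
          nlinarith
      have hbound := vdC2' (le_of_lt hrd) hmu f f' f'' hfd1 hfd2 hfcont2 hsign
      -- 8 / sqrt mu = 8 d / sqrt (c₀ B)
      have hmuB : mu = c₀ * B / d^2 := by
        rw [hmudef, hBx]; field_simp
      have hsqmu : Real.sqrt mu = Real.sqrt (c₀ * B) / d := by
        rw [hmuB, Real.sqrt_div (by positivity), Real.sqrt_sq hd.le]
      have h8 : 8 / Real.sqrt mu = 8 * d / Real.sqrt (c₀ * B) := by
        rw [hsqmu]; field_simp
      rw [h8] at hbound
      have hsqB : 0 < Real.sqrt (c₀ * B) := Real.sqrt_pos.mpr (by positivity)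
      have hSb' : Real.sqrt Sb ≤ Real.sqrt (12 * C₀') * Real.sqrt B := by
        rw [← Real.sqrt_mul (by positivity)]
        exact Real.sqrt_le_sqrt (by linarith)
      have hCb' : Cb * Real.sqrt c₀ = 8 * Real.sqrt (12 * C₀') + 18 * Real.sqrt c₀ := by
        rw [hCbdef]
        have : Real.sqrt c₀ ≠ 0 := ne_of_gt (Real.sqrt_pos.mpr hc₀)
        field_simp
      refine le_trans hbound ?_
      rw [div_le_div_iff₀ hsqB hsqSb, Real.sqrt_mul hc₀.le]
      have hsc : 0 ≤ Real.sqrt c₀ := Real.sqrt_nonneg _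
      have hsB : 0 ≤ Real.sqrt B := Real.sqrt_nonneg _
      have hs12 : 0 ≤ Real.sqrt (12 * C₀') := Real.sqrt_nonneg _
      calc 8 * d * Real.sqrt Sb ≤ 8 * d * (Real.sqrt (12 * C₀') * Real.sqrt B) := by
            gcongr
        _ = (8 * Real.sqrt (12 * C₀')) * (d * Real.sqrt B) := by ring
        _ ≤ (Cb * Real.sqrt c₀) * (d * Real.sqrt B) := by
            apply mul_le_mul_of_nonneg_right _ (by positivity)
            rw [hCb']
            nlinarith
        _ = Cb * d * (Real.sqrt c₀ * Real.sqrt B) := by ring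
    · -- first derivative or trivial
      have hCb18 : 18 ≤ Cb := by
        have h0 : 0 ≤ 8 * Real.sqrt (12 * C₀') / Real.sqrt c₀ := by positivity
        rw [hCbdef]; linarith
      rcases le_or_gt Sb (3 * A) with hcase2 | hcase2
      · -- first derivative dominates
        have hApos : 0 < A := by nlinarith
        set lam : ℝ := A / (2 * d) with hlamdef
        have hlam : 0 < lam := by positivity
        have hAd : |x₁ + ψ' r * x₃| = A / d := by
          rw [hAdef, abs_mul, abs_of_pos hd]
          field_simp
        have hlow : ∀ t ∈ s, lam ≤ |f' t| := by
          intro t ht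
          have hg := hgrow t ht
          have h1 : |x₃ * (ψ' t - ψ' r)| ≤ C₀ * B / d := by
            rw [abs_mul, abs_of_nonneg hg.1]
            calc |x₃| * (ψ' t - ψ' r) ≤ |x₃| * (C₀ * κ * d) := by
                  apply mul_le_mul_of_nonneg_left hg.2 (abs_nonneg _)
              _ = C₀ * (κ * d^2 * |x₃|) / d := by field_simp
              _ = C₀ * B / d := by rw [hBx]
          have h2 : C₀ * B / d ≤ A / (4 * d) := by
            rw [div_le_div_iff₀ hd (by positivity)]
            nlinarith [mul_le_mul_of_nonneg_right hC₀le hB0]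
          have hfv : f' t = -((x₁ + ψ' r * x₃) + x₃ * (ψ' t - ψ' r)) := by
            rw [hf'def]; ring
          rw [hfv, abs_neg]
          have habs : |x₁ + ψ' r * x₃| - |x₃ * (ψ' t - ψ' r)|
              ≤ |(x₁ + ψ' r * x₃) + x₃ * (ψ' t - ψ' r)| := by
            have h := abs_add_le ((x₁ + ψ' r * x₃) + x₃ * (ψ' t - ψ' r)) (-(x₃ * (ψ' t - ψ' r)))
            simp only [add_neg_cancel_right, abs_neg] at h
            linarith
          have e : A/d - A/(4*d) - A/(2*d) = A/(4*d) := by field_simp; ring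
          have hq : 0 < A/(4*d) := by positivity
          rw [hlamdef]
          rw [hAd] at habs
          linarith
        have hsign : (∀ t ∈ s, 0 ≤ f'' t) ∨ (∀ t ∈ s, f'' t ≤ 0) := by
          rcases le_or_gt 0 x₃ with hx | hx
          · right
            intro t ht
            have h1 := (hbd t ht).1
            have hb : f'' t = -(x₃ * ψ'' t) := rfl
            have hp : 0 ≤ ψ'' t := le_trans (by positivity) h1
            rw [hb]
            nlinarith [mul_nonneg hx hp]
          · left
            intro t ht
            have h1 := (hbd t ht).1
            have hb : f'' t = -(x₃ * ψ'' t) := rfl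
            have hp : 0 ≤ ψ'' t := le_trans (by positivity) h1
            rw [hb]
            nlinarith [mul_nonneg (neg_nonneg.mpr hx.le) hp]
        have hbound := vdC1 hrd.le hlam f f' f'' hfd1 hfd2 hfcont2 hsign hlow
        have h3 : 3 / lam = 6 * d / A := by
          rw [hlamdef]; field_simp; ring
        rw [h3] at hbound
        refine le_trans hbound ?_
        rw [div_le_div_iff₀ hApos hsqSb]
        have hsq3A : Real.sqrt Sb ≤ 3 * A := by
          have h4 : Sb ≤ (3*A)^2 := by nlinarith
          calc Real.sqrt Sb ≤ Real.sqrt ((3*A)^2) := Real.sqrt_le_sqrt h4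
            _ = 3 * A := Real.sqrt_sq (by linarith)
        have hh1 : 6 * d * Real.sqrt Sb ≤ 6 * d * (3 * A) :=
          mul_le_mul_of_nonneg_left hsq3A (by positivity)
        have hh2 : 18 * (d * A) ≤ Cb * (d * A) :=
          mul_le_mul_of_nonneg_right hCb18 (by positivity)
        nlinarith [hh1, hh2]
      · -- trivial bound
        have hB12 : B ≤ Sb / 12 := by nlinarith
        have hSb4 : Sb ≤ 4 := by
          have : Sb = 1 + A + B := hSbdef
          nlinarith
        have hsq2 : Real.sqrt Sb ≤ 2 := by
          rw [show (2:ℝ) = Real.sqrt 4 by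
            rw [show (4:ℝ) = 2^2 by norm_num, Real.sqrt_sq (by norm_num)]]
          exact Real.sqrt_le_sqrt hSb4
        have htriv : ‖∫ ξ in r..(r + d), Complex.exp ((f ξ : ℂ) * Complex.I)‖ ≤ d := by
          have h1 : ‖∫ ξ in r..(r + d), Complex.exp ((f ξ : ℂ) * Complex.I)‖
              ≤ 1 * |r + d - r| := by
            apply intervalIntegral.norm_integral_le_of_norm_le_const
            intro x hx
            simp [Complex.norm_exp_ofReal_mul_I]
          rw [one_mul, show r + d - r = d by ring, abs_of_pos hd] at h1
          exact h1
        refine le_trans htriv ?_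
        rw [le_div_iff₀ hsqSb]
        nlinarith [hd.le]
  -- convert to rpow form
  have hrw : Sb ^ (-(1:ℝ)/2) = (Real.sqrt Sb)⁻¹ := by
    rw [show -(1:ℝ)/2 = -(1/2:ℝ) by ring, Real.rpow_neg hSbpos.le, ← Real.sqrt_eq_rpow]
  have hfirst : ‖∫ ξ in r..(r + d), Complex.exp (-Complex.I * ((x₁ * ξ + x₃ * ψ ξ : ℝ) : ℂ))‖
      ≤ Cb * d * Sb ^ (-(1:ℝ)/2) := by
    rw [heq, hrw, ← div_eq_mul_inv]
    exact hmain
  constructor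
  · exact hfirst
  · have h2 : Sb ^ (-(1:ℝ)/2) ≤ Sb ^ (-(1:ℝ)/m) := by
      apply Real.rpow_le_rpow_of_exponent_le hSb1
      have hm0 : (0:ℝ) < m := by linarith
      have h12 : 1/m ≤ 1/2 := by
        rw [div_le_div_iff₀ hm0 (by norm_num : (0:ℝ) < 2)]
        linarith
      have e1 : -(1:ℝ)/2 = -(1/2) := by ring
      have e2 : -(1:ℝ)/m = -(1/m) := by ring
      rw [e1, e2]
      linarith
    calc ‖∫ ξ in r..(r + d), Complex.exp (-Complex.I * ((x₁ * ξ + x₃ * ψ ξ : ℝ) : ℂ))‖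
        ≤ Cb * d * Sb ^ (-(1:ℝ)/2) := hfirst
      _ ≤ Cb * d * Sb ^ (-(1:ℝ)/m) := by
          apply mul_le_mul_of_nonneg_left h2 (by positivity)
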